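/- Let G be a finite undirected graph (possibly with loops) and write deg_G(v) = |N_G(v)|. In the second symmetric tensor power G^{⊙2}: (i) for every vertex a, the degree of the multiset {a,a} equals binom(deg_G(a)+1, 2); (ii) for all distinct vertices a and b, the degree of the multiset {a,b} equals deg_G(a)·deg_G(b) − binom(|N_G(a) ∩ N_G(b)|, 2). -/

import Mathlib

/-- Adjacency in the (unweighted) `k`-th symmetric tensor power of a graph given by an
adjacency relation `adj` on `V`: multisets `i` and `j` of size `k` are adjacent iff there are
`k`-tuples `p, q` with underlying multisets `i` and `j` such that `p ℓ` is adjacent to `q ℓ`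
for every `ℓ`. -/
def symPowAdj {V : Type*} (adj : V → V → Prop) (k : ℕ) (i j : Sym V k) : Prop :=
  ∃ p q : Fin k → V,
    (↑(List.ofFn p) : Multiset V) = ↑i ∧ (↑(List.ofFn q) : Multiset V) = ↑j ∧
    ∀ ℓ : Fin k, adj (p ℓ) (q ℓ)

/-- The vertex `{a, b}` of the second symmetric tensor power. -/
def symPair {V : Type*} (a b : V) : Sym V 2 := Sym.cons a (Sym.cons b Sym.nil)



lemma symPair_coe {V : Type*} (x y : V) : (↑(symPair x y) : Multiset V) = {x, y} := rfl

lemma symPair_comm {V : Type*} (x y : V) : symPair x y = symPair y x :=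
  Sym.coe_injective (by rw [symPair_coe, symPair_coe, Multiset.pair_comm])

lemma multiset_pair_eq {V : Type*} {x y x' y' : V} :
    ({x, y} : Multiset V) = {x', y'} ↔ (x = x' ∧ y = y') ∨ (x = y' ∧ y = x') := by
  constructor
  · intro h
    rw [show ({x, y} : Multiset V) = x ::ₘ {y} from rfl,
      show ({x', y'} : Multiset V) = x' ::ₘ {y'} from rfl, Multiset.cons_eq_cons] at h
    rcases h with ⟨rfl, h⟩ | ⟨hne, cs, h1, h2⟩
    · exact Or.inl ⟨rfl, Multiset.singleton_inj.mp h⟩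
    · have hcs : cs = 0 := by
        have := congrArg Multiset.card h1
        simpa using this
      subst hcs
      rw [Multiset.cons_zero] at h1 h2
      exact Or.inr ⟨(Multiset.singleton_inj.mp h2).symm, Multiset.singleton_inj.mp h1⟩
  · rintro (⟨rfl, rfl⟩ | ⟨rfl, rfl⟩)
    · rfl
    · exact Multiset.pair_comm _ _

lemma symPair_eq_iff {V : Type*} {x y x' y' : V} :
    symPair x y = symPair x' y' ↔ (x = x' ∧ y = y') ∨ (x = y' ∧ y = x') := by
  rw [← Sym.coe_inj, symPair_coe, symPair_coe, multiset_pair_eq]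

lemma ofFn_two {V : Type*} (p : Fin 2 → V) : List.ofFn p = [p 0, p 1] := by
  simp [List.ofFn_succ]

lemma adj_pair_iff {V : Type*} (adj : V → V → Prop) (a b : V) (j : Sym V 2) :
    symPowAdj adj 2 (symPair a b) j ↔ ∃ x y, adj a x ∧ adj b y ∧ j = symPair x y := by
  constructor
  · rintro ⟨p, q, hp, hq, h⟩
    rw [ofFn_two] at hp hq
    have hp' : ({p 0, p 1} : Multiset V) = {a, b} := by rw [← symPair_coe a b, ← hp]; rfl
    have hj : j = symPair (q 0) (q 1) := Sym.coe_injective (by rw [← hq]; rfl)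
    rcases multiset_pair_eq.mp hp' with ⟨h1, h2⟩ | ⟨h1, h2⟩
    · exact ⟨q 0, q 1, h1 ▸ h 0, h2 ▸ h 1, hj⟩
    · exact ⟨q 1, q 0, h2 ▸ h 1, h1 ▸ h 0, hj.trans (symPair_comm _ _)⟩
  · rintro ⟨x, y, hx, hy, rfl⟩
    refine ⟨![a, b], ![x, y], ?_, ?_, ?_⟩
    · rw [ofFn_two]; rfl
    · rw [ofFn_two]; rfl
    · intro ℓ; fin_cases ℓ <;> simpa


lemma choose_arith (d : ℕ) : d * d - Nat.choose d 2 = Nat.choose (d + 1) 2 := by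
  rcases d with _ | k
  · simp
  · rw [Nat.choose_two_right, Nat.choose_two_right, Nat.add_sub_cancel, Nat.add_sub_cancel]
    obtain ⟨m, hm⟩ : Even ((k + 1) * k) := by
      simpa [Nat.mul_comm] using Nat.even_mul_succ_self k
    have h1 : (k + 1) * (k + 1) = (k + 1) * k + (k + 1) := by ring
    have h2 : (k + 1 + 1) * (k + 1) = (k + 1) * k + 2 * (k + 1) := by ring
    rw [h1, h2, hm]
    omega

open Finset in
lemma count_pairs {V : Type*} [Fintype V] [DecidableEq V] (adj : V → V → Prop) (a b : V) :
    {j : Sym V 2 | symPowAdj adj 2 (symPair a b) j}.ncard =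
      {y : V | adj a y}.ncard * {y : V | adj b y}.ncard
        - Nat.choose ({y : V | adj a y} ∩ {y : V | adj b y}).ncard 2 := by
  classical
  set Fa : Finset V := univ.filter (adj a) with hFa
  set Fb : Finset V := univ.filter (adj b) with hFb
  set I : Finset V := Fa ∩ Fb with hI
  set e := Fintype.equivFin V with he
  set r : V → V → Prop := fun x y => (e x : ℕ) < e y with hr
  set f : V × V → Sym V 2 := fun p => symPair p.1 p.2 with hf
  set B : Finset (V × V) := (I ×ˢ I).filter (fun p => r p.2 p.1) with hB
  -- set-to-finset conversions
  have hsa : {y : V | adj a y} = ↑Fa := by ext y; simp [hFa]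
  have hsb : {y : V | adj b y} = ↑Fb := by ext y; simp [hFb]
  have hsi : {y : V | adj a y} ∩ {y : V | adj b y} = ↑I := by ext y; simp [hI, hFa, hFb]
  -- the neighbour set as a finset image
  have hS : {j : Sym V 2 | symPowAdj adj 2 (symPair a b) j} = ↑((Fa ×ˢ Fb).image f) := by
    ext j
    simp only [Set.mem_setOf_eq, coe_image, Set.mem_image, mem_coe, mem_product,
      adj_pair_iff]
    constructor
    · rintro ⟨x, y, hx, hy, rfl⟩
      exact ⟨(x, y), ⟨by simp [hFa, hx], by simp [hFb, hy]⟩, rfl⟩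
    · rintro ⟨⟨x, y⟩, ⟨hx, hy⟩, rfl⟩
      exact ⟨x, y, by simpa [hFa] using hx, by simpa [hFb] using hy, rfl⟩
  -- image over the full product equals image over product minus B
  have hBsub : B ⊆ Fa ×ˢ Fb := by
    intro p hp
    rw [hB, mem_filter, mem_product] at hp
    rw [mem_product]
    exact ⟨(mem_inter.mp hp.1.1).1, (mem_inter.mp hp.1.2).2⟩
  have himg : (Fa ×ˢ Fb).image f = ((Fa ×ˢ Fb) \ B).image f := by
    apply Subset.antisymm _ (image_subset_image sdiff_subset)
    intro j hj
    obtain ⟨p, hp, rfl⟩ := mem_image.mp hj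
    by_cases hpB : p ∈ B
    · refine mem_image.mpr ⟨(p.2, p.1), mem_sdiff.mpr ⟨?_, ?_⟩, (symPair_comm _ _)⟩
      · rw [hB, mem_filter, mem_product] at hpB
        rw [mem_product]
        exact ⟨(mem_inter.mp hpB.1.2).1, (mem_inter.mp hpB.1.1).2⟩
      · rw [hB, mem_filter, mem_product] at hpB ⊢
        intro h
        have h1 : (e p.1 : ℕ) < e p.2 := h.2
        have h2 : (e p.2 : ℕ) < e p.1 := hpB.2
        omega
    · exact mem_image.mpr ⟨p, mem_sdiff.mpr ⟨hp, hpB⟩, rfl⟩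
  -- f is injective on the product minus B
  have hinj : Set.InjOn f ↑((Fa ×ˢ Fb) \ B) := by
    intro p hp p' hp' hfp
    simp only [coe_sdiff, Set.mem_diff, mem_coe, mem_product] at hp hp'
    rcases symPair_eq_iff.mp hfp with ⟨h1, h2⟩ | ⟨h1, h2⟩
    · exact Prod.ext h1 h2
    · by_cases hd : p.1 = p.2
      · exact Prod.ext (hd.trans h2) (hd.symm.trans h1)
      · exfalso
        have hp1I : p.1 ∈ I := mem_inter.mpr ⟨hp.1.1, h1 ▸ hp'.1.2⟩
        have hp2I : p.2 ∈ I := mem_inter.mpr ⟨h2 ▸ hp'.1.1, hp.1.2⟩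
        have hne : (e p.1 : ℕ) ≠ (e p.2 : ℕ) := by
          intro h
          exact hd (e.injective (Fin.ext h))
        rcases Nat.lt_or_ge (e p.1 : ℕ) (e p.2 : ℕ) with hlt | hge
        · apply hp'.2
          rw [hB, mem_filter, mem_product]
          exact ⟨⟨h2 ▸ hp2I, h1 ▸ hp1I⟩, by simpa [hr, ← h1, ← h2] using hlt⟩
        · apply hp.2
          rw [hB, mem_filter, mem_product]
          exact ⟨⟨hp1I, hp2I⟩, by simp only [hr]; omega⟩
  -- cardinality of B
  have hcardB : B.card = Nat.choose I.card 2 := by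
    set B' : Finset (V × V) := (I ×ˢ I).filter (fun p => r p.1 p.2) with hB'
    have hBB' : B.card = B'.card := by
      apply Finset.card_bij (fun p _ => (p.2, p.1))
      · intro p hp
        rw [hB, mem_filter, mem_product] at hp
        rw [hB', mem_filter, mem_product]
        exact ⟨⟨hp.1.2, hp.1.1⟩, hp.2⟩
      · intro p _ q _ h
        exact Prod.ext (congrArg Prod.snd h) (congrArg Prod.fst h)
      · intro p hp
        rw [hB', mem_filter, mem_product] at hp
        refine ⟨(p.2, p.1), ?_, rfl⟩
        rw [hB, mem_filter, mem_product]
        exact ⟨⟨hp.1.2, hp.1.1⟩, hp.2⟩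
    have hdisj : Disjoint B B' := by
      rw [Finset.disjoint_left]
      intro p hpB hpB'
      rw [hB, mem_filter] at hpB
      rw [hB', mem_filter] at hpB'
      have h1 : (e p.2 : ℕ) < e p.1 := hpB.2
      have h2 : (e p.1 : ℕ) < e p.2 := hpB'.2
      omega
    have hunion : B ∪ B' = I.offDiag := by
      rw [hB, hB', filter_union_right]
      rw [show I.offDiag = (I ×ˢ I).filter (fun p => p.1 ≠ p.2) from by
        ext p; simp [mem_offDiag, and_assoc]]
      apply filter_congr
      intro p _
      simp only [hr]
      constructor
      · intro h hq
        rw [hq] at h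
        omega
      · intro h
        have hne : (e p.1 : ℕ) ≠ (e p.2 : ℕ) := fun hh => h (e.injective (Fin.ext hh))
        omega
    have h2card : 2 * B.card = I.card * I.card - I.card := by
      have := Finset.card_union_of_disjoint hdisj
      rw [hunion, Finset.offDiag_card] at this
      omega
    rw [Nat.choose_two_right]
    have hm : I.card * I.card - I.card = I.card * (I.card - 1) := by
      rw [Nat.mul_sub_one, Nat.mul_comm]
    rw [hm] at h2card
    omega
  -- put everything together
  rw [hS, Set.ncard_coe_finset, himg, Finset.card_image_of_injOn hinj,
    Finset.card_sdiff_of_subset hBsub, Finset.card_product, hcardB,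
    hsi, hsa, hsb, Set.ncard_coe_finset, Set.ncard_coe_finset, Set.ncard_coe_finset]

/-- in `G^{⊙2}`, (i) the degree of `{a,a}` is `binom(deg_G(a)+1, 2)`;
(ii) for `a ≠ b`, the degree of `{a,b}` is
`deg_G(a)·deg_G(b) − binom(|N_G(a) ∩ N_G(b)|, 2)`. -/
theorem symPow_two_degrees {V : Type*} [Fintype V] [DecidableEq V]
    (adj : V → V → Prop) (hsym : Symmetric adj) :
    (∀ a : V,
      {j : Sym V 2 | symPowAdj adj 2 (symPair a a) j}.ncard =
        Nat.choose ({y : V | adj a y}.ncard + 1) 2) ∧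
    (∀ a b : V, a ≠ b →
      {j : Sym V 2 | symPowAdj adj 2 (symPair a b) j}.ncard =
        {y : V | adj a y}.ncard * {y : V | adj b y}.ncard
          - Nat.choose ({y : V | adj a y} ∩ {y : V | adj b y}).ncard 2) := by
  classical
  constructor
  · intro a
    rw [count_pairs adj a a, Set.inter_self, choose_arith]
  · intro a b _
    exact count_pairs adj a b
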